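/- Signature extension reflects termination: if F ⊆ G are signatures (with G's arity function extending F's) and R is a set of rewrite rules whose terms lie in T(F,X), then the rewrite relation generated by R on T(F,X) is well-founded if and only if the rewrite relation generated by R on T(G,X) is well-founded. -/

import Mathlib

inductive Term (F : Type) (ar : F → ℕ) (X : Type) : Type
  | var : X → Term F ar X
  | fn : (f : F) → (Fin (ar f) → Term F ar X) → Term F ar X

def subst {F X : Type} {ar : F → ℕ} (σ : X → Term F ar X) : Term F ar X → Term F ar X
  | .var x => σ x
  | .fn f args => .fn f (fun i => subst σ (args i))

inductive Rew {F X : Type} {ar : F → ℕ} (R : Set (Term F ar X × Term F ar X)) :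
    Term F ar X → Term F ar X → Prop
  | rule : ∀ (l r : Term F ar X) (σ : X → Term F ar X), (l, r) ∈ R →
      Rew R (subst σ l) (subst σ r)
  | ctx : ∀ (f : F) (args : Fin (ar f) → Term F ar X) (i : Fin (ar f)) (t u : Term F ar X),
      Rew R t u →
      Rew R (.fn f (Function.update args i t)) (.fn f (Function.update args i u))

/-- A relation terminates iff there is no infinite chain, i.e. its flip is well-founded. -/
def Terminating {α : Type _} (r : α → α → Prop) : Prop := WellFounded (fun a b => r b a)
/-- Homomorphic extension to terms of an arity-preserving map of signatures. -/
def mapTerm {F G X : Type} {arF : F → ℕ} {arG : G → ℕ}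
    (φ : F → G) (h : ∀ f, arG (φ f) = arF f) : Term F arF X → Term G arG X
  | .var x => .var x
  | .fn f args => .fn (φ f) (fun i => mapTerm φ h (args (Fin.cast (h f) i)))

/-- Image of a set of rules under a signature morphism. -/
def mapRules {F G X : Type} {arF : F → ℕ} {arG : G → ℕ}
    (φ : F → G) (h : ∀ f, arG (φ f) = arF f)
    (R : Set (Term F arF X × Term F arF X)) :
    Set (Term G arG X × Term G arG X) :=
  { p | ∃ l r, (l, r) ∈ R ∧ p = (mapTerm φ h l, mapTerm φ h r) }

namespace SigExt

/-! ### generic helpers -/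

lemma not_acc_of_chain {α : Type*} (r : α → α → Prop) (f : ℕ → α) (hf : ∀ n, r (f n) (f (n + 1))) :
    ¬ Acc (fun a b => r b a) (f 0) := by
  intro h
  suffices H : ∀ a, Acc (fun a b => r b a) a →
      ∀ g : ℕ → α, (∀ n, r (g n) (g (n + 1))) → g 0 = a → False from H _ h f hf rfl
  intro a ha
  induction ha with
  | intro a _ ih =>
    rintro g hg rfl
    exact ih (g 1) (hg 0) (fun n => g (n + 1)) (fun n => hg (n + 1)) rfl

lemma acc_vec {α : Type*} (r : α → α → Prop) :
    ∀ {n : ℕ} (a : Fin n → α), (∀ i, Acc r (a i)) →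
      Acc (fun b a => ∃ i u, r u (a i) ∧ b = Function.update a i u) a := by
  intro n
  induction n with
  | zero =>
    intro a _; constructor; rintro b ⟨i, -⟩; exact i.elim0
  | succ n IH =>
    have aux : ∀ x, Acc r x →
        ∀ t : Fin n → α, Acc (fun b a => ∃ i u, r u (a i) ∧ b = Function.update a i u) t →
        Acc (fun b a : Fin (n+1) → α => ∃ i u, r u (a i) ∧ b = Function.update a i u) (Fin.cons x t) := by
      intro x hx
      induction hx with
      | intro x _ ihx =>
        intro t ht
        induction ht with
        | intro t ht' iht =>
          constructor
          rintro b ⟨i, u, hu, rfl⟩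
          rcases Fin.eq_zero_or_eq_succ i with rfl | ⟨j, rfl⟩
          · rw [Fin.update_cons_zero]
            exact ihx u (by simpa using hu) t ⟨t, ht'⟩
          · rw [← Fin.cons_update]
            exact iht (Function.update t j u) ⟨j, u, by simpa using hu, rfl⟩
    intro a ha
    rw [← Fin.cons_self_tail a]
    exact aux _ (ha 0) _ (IH (Fin.tail a) (fun i => ha i.succ))


/-! ### occurrences and subterms -/

variable {F G X : Type} {arF : F → ℕ} {arG : G → ℕ}

def Occurs {Y : Type} {A : Type} {ar : A → ℕ} (x : Y) : Term A ar Y → Prop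
  | .var y => x = y
  | .fn _ args => ∃ i, Occurs x (args i)

lemma subst_eq_of_occurs {σ σ' : X → Term F arF X} :
    ∀ t : Term F arF X, (∀ x, Occurs x t → σ x = σ' x) → subst σ t = subst σ' t
  | .var x, h => h x rfl
  | .fn f args, h => by
    show Term.fn f (fun i => subst σ (args i)) = Term.fn f (fun i => subst σ' (args i))
    congr 1; funext i
    exact subst_eq_of_occurs (args i) (fun x hx => h x ⟨i, hx⟩)

inductive Sub {Y : Type} {A : Type} {ar : A → ℕ} : Term A ar Y → Term A ar Y → Prop
  | refl (t) : Sub t t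
  | arg {t} (f) (args : Fin (ar f) → Term A ar Y) (i) : Sub t (args i) → Sub t (.fn f args)

lemma Sub.trans {Y A : Type} {ar : A → ℕ} {a b c : Term A ar Y}
    (h1 : Sub a b) (h2 : Sub b c) : Sub a c := by
  induction h2 with
  | refl => exact h1
  | arg f args i _ ih => exact .arg f args i ih

lemma occurs_sub {σ : X → Term F arF X} {y : X} :
    ∀ {t : Term F arF X}, Occurs y t → Sub (σ y) (subst σ t)
  | .var x, h => by cases h; exact .refl _
  | .fn f args, ⟨i, h⟩ => .arg f (fun i => subst σ (args i)) i (occurs_sub h)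

lemma sub_rew {R : Set (Term F arF X × Term F arF X)} {t t' : Term F arF X} :
    ∀ {v}, Sub t v → Rew R t t' → ∃ v', Rew R v v' ∧ Sub t' v' := by
  intro v hv
  induction hv with
  | refl => exact fun h => ⟨t', h, .refl t'⟩
  | arg f args i hsub ih =>
    intro h
    obtain ⟨w, hw, hsw⟩ := ih h
    refine ⟨.fn f (Function.update args i w), ?_, ?_⟩
    · have := Rew.ctx f args i (args i) w hw
      rwa [Function.update_eq_self] at this
    · have : Sub t' ((Function.update args i w) i) := by
        rw [Function.update_self]; exact hsw
      exact .arg f _ i this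

lemma not_acc_of_sub_step {R : Set (Term F arF X × Term F arF X)} {t₀ t₁ : Term F arF X}
    (h01 : Rew R t₀ t₁) (hs : Sub t₀ t₁) :
    ¬ Acc (fun a b => Rew R b a) t₀ := by
  have step : ∀ v, Sub t₀ v → ∃ v', Rew R v v' ∧ Sub t₀ v' := by
    intro v hv
    obtain ⟨v', hr, hsub⟩ := sub_rew hv h01
    exact ⟨v', hr, hs.trans hsub⟩
  let g : ℕ → {v : Term F arF X // Sub t₀ v} :=
    fun n => Nat.rec ⟨t₀, .refl _⟩
      (fun _ p => ⟨(step p.1 p.2).choose, (step p.1 p.2).choose_spec.2⟩) n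
  have hchain : ∀ n, Rew R ((g n).1) ((g (n + 1)).1) :=
    fun n => (step (g n).1 (g n).2).choose_spec.1
  exact not_acc_of_chain (Rew R) (fun n => (g n).1) hchain

/-! ### the easy direction -/

lemma map_subst (ι : F → G) (har : ∀ f, arG (ι f) = arF f) (σ : X → Term F arF X) :
    ∀ t : Term F arF X,
      mapTerm ι har (subst σ t) = subst (fun x => mapTerm ι har (σ x)) (mapTerm ι har t)
  | .var x => rfl
  | .fn f args => by
    show Term.fn (ι f) _ = Term.fn (ι f) _
    congr 1; funext i
    exact map_subst ι har σ (args (Fin.cast (har f) i))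

lemma map_rew (ι : F → G) (har : ∀ f, arG (ι f) = arF f)
    {R : Set (Term F arF X × Term F arF X)} {t u : Term F arF X}
    (h : Rew R t u) : Rew (mapRules ι har R) (mapTerm ι har t) (mapTerm ι har u) := by
  induction h with
  | rule l r σ hmem =>
    rw [map_subst, map_subst]
    exact Rew.rule _ _ _ ⟨l, r, hmem, rfl⟩
  | ctx f args i t u _ ih =>
    have key : ∀ v : Term F arF X,
        (fun j => mapTerm ι har (Function.update args i v (Fin.cast (har f) j)))
          = Function.update (fun j => mapTerm ι har (args (Fin.cast (har f) j)))
              (Fin.cast (har f).symm i) (mapTerm ι har v) := by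
      intro v; funext j
      by_cases hj : j = Fin.cast (har f).symm i
      · subst hj
        rw [Function.update_self]
        congr 1
        have hcc : Fin.cast (har f) (Fin.cast (har f).symm i) = i := Fin.ext (by simp)
        rw [hcc, Function.update_self]
      · rw [Function.update_of_ne hj]
        have : Fin.cast (har f) j ≠ i := fun hc => hj (by apply Fin.ext; simpa using congrArg Fin.val hc)
        rw [Function.update_of_ne this]
    show Rew _ (Term.fn (ι f) _) (Term.fn (ι f) _)
    rw [key t, key u]
    exact Rew.ctx (ι f) _ _ _ _ ih

/-! ### cap machinery -/

lemma fn_congr {A Y : Type} {ar : A → ℕ} {f f' : A} (h : f = f')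
    {args : Fin (ar f) → Term A ar Y} {args' : Fin (ar f') → Term A ar Y}
    (h2 : ∀ i : Fin (ar f), args i = args' (Fin.cast (by rw [h]) i)) :
    Term.fn f args = Term.fn f' args' := by
  subst h
  congr 1
  funext i
  exact h2 i

variable (ι : F → G) (har : ∀ f, arG (ι f) = arF f)

def expand : Term F arF (X ⊕ Term G arG X) → Term G arG X
  | .var (.inl x) => .var x
  | .var (.inr t) => t
  | .fn f args => .fn (ι f) (fun i => expand (args (Fin.cast (har f) i)))

def collapse (b : Term F arF X) : Term F arF (X ⊕ Term G arG X) → Term F arF X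
  | .var (.inl x) => .var x
  | .var (.inr _) => b
  | .fn f args => .fn f (fun i => collapse b (args i))

def Holes : Term F arF (X ⊕ Term G arG X) → Set (Term G arG X)
  | .var (.inl _) => ∅
  | .var (.inr t) => {t}
  | .fn _ args => {a | ∃ i, a ∈ Holes (args i)}

def pushSubst (σ : X → Term F arF (X ⊕ Term G arG X)) :
    Term F arF X → Term F arF (X ⊕ Term G arG X)
  | .var x => σ x
  | .fn f args => .fn f (fun i => pushSubst σ (args i))

def isAlien : Term G arG X → Prop
  | .var _ => False
  | .fn g _ => ¬ ∃ f, ι f = g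

open Classical in
noncomputable def capify : Term G arG X → Term F arF (X ⊕ Term G arG X)
  | .var x => .var (.inl x)
  | .fn g args =>
    if h : ∃ f, ι f = g then
      .fn h.choose (fun i =>
        capify (args (Fin.cast ((har h.choose).symm.trans (congrArg arG h.choose_spec)) i)))
    else .var (.inr (.fn g args))

section CapLemmas

variable {ι har}

lemma capify_fn (hinj : Function.Injective ι) (f : F) (args : Fin (arG (ι f)) → Term G arG X) :
    capify ι har (.fn (ι f) args)
      = .fn f (fun i => capify ι har (args (Fin.cast (har f).symm i))) := by
  rw [capify, dif_pos ⟨f, rfl⟩]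
  apply fn_congr (hinj (⟨f, rfl⟩ : ∃ f', ι f' = ι f).choose_spec)
  intro i
  first
  | rfl
  | (congr 1; exact Fin.ext (by simp))

lemma expand_capify (hinj : Function.Injective ι) (t : Term G arG X) :
    expand ι har (capify ι har t) = t := by
  induction t with
  | var x => rfl
  | fn g args ih =>
    by_cases h : ∃ f, ι f = g
    · obtain ⟨f, rfl⟩ := h
      rw [capify_fn hinj]
      show Term.fn (ι f) _ = _
      congr 1
      funext i
      show expand ι har (capify ι har (args (Fin.cast (har f).symm (Fin.cast (har f) i)))) = args i
      have hcc : Fin.cast (har f).symm (Fin.cast (har f) i) = i := Fin.ext (by simp)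
      rw [hcc]
      exact ih i
    · rw [capify, dif_neg h]
      rfl

lemma goodCap_capify : ∀ t : Term G arG X, ∀ a ∈ Holes (capify ι har t), isAlien ι a
  | .var x => by intro a ha; rw [capify] at ha; exact absurd ha (by simp [Holes])
  | .fn g args => by
    intro a ha
    by_cases h : ∃ f, ι f = g
    · rw [capify, dif_pos h] at ha
      obtain ⟨i, hi⟩ := ha
      exact goodCap_capify _ a hi
    · rw [capify, dif_neg h] at ha
      cases ha
      exact h

lemma capify_expand (hinj : Function.Injective ι) : ∀ c : Term F arF (X ⊕ Term G arG X),
    (∀ a ∈ Holes c, isAlien ι a) → capify ι har (expand ι har c) = c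
  | .var (.inl x), _ => rfl
  | .var (.inr t), hgood => by
    have ht : isAlien ι t := hgood t rfl
    cases t with
    | var y => exact absurd ht (by simp [isAlien])
    | fn g args =>
      show capify ι har (.fn g args) = _
      rw [capify, dif_neg ht]
  | .fn f capargs, hgood => by
    show capify ι har (.fn (ι f) _) = _
    rw [capify_fn hinj]
    congr 1
    funext i
    show capify ι har (expand ι har (capargs (Fin.cast (har f) (Fin.cast (har f).symm i)))) = capargs i
    have hcc : Fin.cast (har f) (Fin.cast (har f).symm i) = i := Fin.ext (by simp)
    rw [hcc]
    exact capify_expand hinj (capargs i) (fun a ha => hgood a ⟨i, ha⟩)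

lemma expand_pushSubst (σ : X → Term F arF (X ⊕ Term G arG X)) :
    ∀ t : Term F arF X,
      expand ι har (pushSubst σ t) = subst (fun x => expand ι har (σ x)) (mapTerm ι har t)
  | .var x => rfl
  | .fn f args => by
    show Term.fn (ι f) _ = Term.fn (ι f) _
    congr 1
    funext i
    exact expand_pushSubst σ (args (Fin.cast (har f) i))

lemma collapse_pushSubst (b : Term F arF X) (σ : X → Term F arF (X ⊕ Term G arG X)) :
    ∀ t : Term F arF X,
      collapse b (pushSubst σ t) = subst (fun x => collapse b (σ x)) t
  | .var x => rfl
  | .fn f args => by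
    show Term.fn f _ = Term.fn f _
    congr 1
    funext i
    exact collapse_pushSubst b σ (args i)

lemma holes_pushSubst (σ : X → Term F arF (X ⊕ Term G arG X)) :
    ∀ t : Term F arF X, ∀ a ∈ Holes (pushSubst σ t), ∃ x, Occurs x t ∧ a ∈ Holes (σ x)
  | .var x, a, ha => ⟨x, rfl, ha⟩
  | .fn f args, a, ha => by
    obtain ⟨i, hi⟩ := ha
    obtain ⟨x, hx, hax⟩ := holes_pushSubst σ (args i) a hi
    exact ⟨x, ⟨i, hx⟩, hax⟩

lemma holes_pushSubst' (σ : X → Term F arF (X ⊕ Term G arG X)) {x : X} :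
    ∀ t : Term F arF X, Occurs x t → Holes (σ x) ⊆ Holes (pushSubst σ t)
  | .var y, h => by cases h; exact subset_rfl
  | .fn f args, ⟨i, hi⟩ => fun a ha => ⟨i, holes_pushSubst' σ (args i) hi ha⟩

lemma capify_subst (hinj : Function.Injective ι) (σ : X → Term G arG X) :
    ∀ t : Term F arF X,
      capify ι har (subst σ (mapTerm ι har t)) = pushSubst (fun x => capify ι har (σ x)) t
  | .var x => rfl
  | .fn f args => by
    show capify ι har (.fn (ι f) _) = _
    rw [capify_fn hinj]
    show Term.fn f _ = Term.fn f _
    congr 1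
    funext i
    show capify ι har (subst σ (mapTerm ι har (args (Fin.cast (har f) (Fin.cast (har f).symm i)))))
        = pushSubst (fun x => capify ι har (σ x)) (args i)
    have hcc2 : Fin.cast (har f) (Fin.cast (har f).symm i) = i := Fin.ext (by simp)
    rw [hcc2]
    exact capify_subst hinj σ (args i)

end CapLemmas

/-! ### hole steps -/

section HoleStep

variable {ι} {har}

inductive HoleStep (r : Term G arG X → Term G arG X → Prop) :
    Term F arF (X ⊕ Term G arG X) → Term F arF (X ⊕ Term G arG X) → Prop
  | here {a a'} : r a a' → HoleStep r (.var (.inr a)) (.var (.inr a'))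
  | ctx (f) (args : Fin (arF f) → Term F arF (X ⊕ Term G arG X)) (i) (b) :
      HoleStep r (args i) b → HoleStep r (.fn f args) (.fn f (Function.update args i b))

variable {r : Term G arG X → Term G arG X → Prop}

lemma holeStep_collapse (b₀ : Term F arF X)
    {c c' : Term F arF (X ⊕ Term G arG X)} (h : HoleStep r c c') :
    collapse b₀ c' = collapse b₀ c := by
  induction h with
  | here _ => rfl
  | ctx f args i b _ ih =>
    show Term.fn f _ = Term.fn f _
    congr 1
    funext j
    by_cases hj : j = i
    · subst hj; rw [Function.update_self]; exact ih
    · rw [Function.update_of_ne hj]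

lemma holeStep_holes {c c' : Term F arF (X ⊕ Term G arG X)} (h : HoleStep r c c') :
    ∀ a' ∈ Holes c', a' ∈ Holes c ∨ ∃ a ∈ Holes c, r a a' := by
  induction h with
  | here h =>
    rintro a' rfl
    exact Or.inr ⟨_, rfl, h⟩
  | ctx f args i b _ ih =>
    rintro a' ⟨j, hj⟩
    by_cases hji : j = i
    · subst hji
      rw [Function.update_self] at hj
      rcases ih a' hj with h' | ⟨a, ha, har'⟩
      · exact Or.inl ⟨j, h'⟩
      · exact Or.inr ⟨a, ⟨j, ha⟩, har'⟩
    · rw [Function.update_of_ne hji] at hj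
      exact Or.inl ⟨j, hj⟩

lemma acc_holeStep : ∀ c : Term F arF (X ⊕ Term G arG X),
    (∀ a ∈ Holes c, Acc (fun a b => r b a) a) →
    Acc (fun c' c => HoleStep r c c') c := by
  intro c
  induction c with
  | var y =>
    cases y with
    | inl x =>
      intro _
      constructor
      rintro c' h
      cases h
    | inr a =>
      intro hacc
      have ha : Acc (fun a b => r b a) a := hacc a rfl
      clear hacc
      induction ha with
      | intro a _ ih =>
        constructor
        rintro c' h
        cases h with
        | here h' => exact ih _ h'
  | fn f args ih =>
    intro hacc
    have hv : Acc (fun b a => ∃ i u, (fun c' c => HoleStep r c c') u (a i) ∧ b = Function.update a i u) args :=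
      acc_vec _ args (fun i => ih i (fun a ha => hacc a ⟨i, ha⟩))
    clear hacc ih
    induction hv with
    | intro a _ ihv =>
      constructor
      rintro c' h
      cases h with
      | ctx f a i b hb => exact ihv (Function.update a i b) ⟨i, b, hb, rfl⟩

end HoleStep

/-! ### rewriting inversions -/

lemma acc_arg {A Y : Type} {ar : A → ℕ} {S : Set (Term A ar Y × Term A ar Y)} :
    ∀ u, Acc (fun a b => Rew S b a) u →
      ∀ (f) (args : Fin (ar f) → Term A ar Y) (i), u = .fn f args →
        Acc (fun a b => Rew S b a) (args i) := by
  intro u h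
  induction h with
  | intro u _ ih =>
    rintro f args i rfl
    constructor
    intro b hb
    have hstep : Rew S (.fn f args) (.fn f (Function.update args i b)) := by
      have := Rew.ctx f args i (args i) b hb
      rwa [Function.update_eq_self] at this
    have := ih _ hstep f (Function.update args i b) i rfl
    rwa [Function.update_self] at this

section Rspec

variable {ι} {har} {R : Set (Term F arF X × Term F arF X)}

lemma rew_var_inv (hnv : ∀ l r, (l, r) ∈ R → ∃ f as, l = Term.fn f as)
    {x : X} {u : Term G arG X} (h : Rew (mapRules ι har R) (.var x) u) : False := by
  generalize hT : (Term.var x : Term G arG X) = T at h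
  cases h with
  | rule l r σ hmem =>
    obtain ⟨l₀, r₀, hR, hpair⟩ := hmem
    obtain ⟨f₀, as₀, rfl⟩ := hnv l₀ r₀ hR
    rw [Prod.ext_iff] at hpair
    obtain ⟨hl, -⟩ := hpair
    simp only at hl
    subst hl
    rw [show (mapTerm ι har (Term.fn f₀ as₀)) = Term.fn (ι f₀)
        (fun i => mapTerm ι har (as₀ (Fin.cast (har f₀) i))) from rfl] at hT
    exact nomatch (hT.trans (rfl : subst σ _ = _))
  | ctx f args i t u hstep => exact nomatch hT

lemma rew_alien_inv (hnv : ∀ l r, (l, r) ∈ R → ∃ f as, l = Term.fn f as)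
    {g : G} (hg : ¬ ∃ f, ι f = g) {as : Fin (arG g) → Term G arG X} {u : Term G arG X}
    (h : Rew (mapRules ι har R) (.fn g as) u) :
    ∃ i w, Rew (mapRules ι har R) (as i) w ∧ u = .fn g (Function.update as i w) := by
  generalize hT : (Term.fn g as : Term G arG X) = T at h
  cases h with
  | rule l r σ hmem =>
    obtain ⟨l₀, r₀, hR, hpair⟩ := hmem
    obtain ⟨f₀, as₀, rfl⟩ := hnv l₀ r₀ hR
    rw [Prod.ext_iff] at hpair
    obtain ⟨hl, -⟩ := hpair
    simp only at hl
    subst hl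
    have : (Term.fn g as : Term G arG X)
        = Term.fn (ι f₀) (fun i => subst σ (mapTerm ι har (as₀ (Fin.cast (har f₀) i)))) := hT
    injection this with h1 _
    exact absurd ⟨f₀, h1.symm⟩ hg
  | ctx f args i w w' hstep =>
    injection hT with h1 h2
    subst h1
    have h2' : as = Function.update args i w := eq_of_heq h2
    subst h2'
    refine ⟨i, w', ?_, ?_⟩
    · rwa [Function.update_self]
    · rw [Function.update_idem]

lemma alien_step (hnv : ∀ l r, (l, r) ∈ R → ∃ f as, l = Term.fn f as)
    {t u : Term G arG X} (ha : isAlien ι t) (h : Rew (mapRules ι har R) t u) :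
    isAlien ι u := by
  cases t with
  | var x => exact absurd ha (by simp [isAlien])
  | fn g as =>
    have hg : ¬ ∃ f, ι f = g := ha
    obtain ⟨i, w, -, rfl⟩ := rew_alien_inv hnv hg h
    exact hg

lemma acc_fn_alien (hnv : ∀ l r, (l, r) ∈ R → ∃ f as, l = Term.fn f as)
    {g : G} (hg : ¬ ∃ f, ι f = g) (as : Fin (arG g) → Term G arG X)
    (h : ∀ i, Acc (fun a b => Rew (mapRules ι har R) b a) (as i)) :
    Acc (fun a b => Rew (mapRules ι har R) b a) (.fn g as) := by
  have hv := acc_vec (fun a b => Rew (mapRules ι har R) b a) as h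
  clear h
  induction hv with
  | intro a _ ih =>
    constructor
    intro u hu
    obtain ⟨i, w, hw, rfl⟩ := rew_alien_inv hnv hg hu
    exact ih (Function.update a i w) ⟨i, w, hw, rfl⟩

lemma holes_capify_acc (t : Term G arG X)
    (hAcc : Acc (fun a b => Rew (mapRules ι har R) b a) t) :
    ∀ a ∈ Holes (capify ι har t), Acc (fun a b => Rew (mapRules ι har R) b a) a := by
  induction t with
  | var x => intro a ha; rw [capify] at ha; exact absurd ha (by simp [Holes])
  | fn g args ih =>
    intro a ha
    by_cases h : ∃ f, ι f = g
    · rw [capify, dif_pos h] at ha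
      obtain ⟨i, hi⟩ := ha
      exact ih _ (acc_arg _ hAcc g args _ rfl) a hi
    · rw [capify, dif_neg h] at ha
      cases ha
      exact hAcc

lemma classify (hinj : Function.Injective ι) (b : Term F arF X)
    (hnv : ∀ l r, (l, r) ∈ R → ∃ f as, l = Term.fn f as)
    (hvc : ∀ l r y, (l, r) ∈ R → Occurs y r → Occurs y l) :
    ∀ {t u : Term G arG X}, Rew (mapRules ι har R) t u →
      ∀ c : Term F arF (X ⊕ Term G arG X),
        (∀ a ∈ Holes c, isAlien ι a) → expand ι har c = t →
        ∃ c', expand ι har c' = u ∧ (∀ a ∈ Holes c', isAlien ι a) ∧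
          ((Rew R (collapse b c) (collapse b c') ∧ Holes c' ⊆ Holes c) ∨
            HoleStep (Rew (mapRules ι har R)) c c') := by
  intro t u h
  induction h with
  | rule L Rr σ hmem =>
    intro c hgood hexp
    obtain ⟨l₀, r₀, hR, hpair⟩ := hmem
    rw [Prod.ext_iff] at hpair
    obtain ⟨hl, hr⟩ := hpair
    simp only at hl hr
    subst hl
    subst hr
    have hc : c = pushSubst (fun x => capify ι har (σ x)) l₀ := by
      rw [← capify_expand hinj c hgood, hexp, capify_subst hinj]
    subst hc
    refine ⟨pushSubst (fun x => capify ι har (σ x)) r₀, ?_, ?_, Or.inl ⟨?_, ?_⟩⟩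
    · rw [expand_pushSubst]
      congr 1
      funext x
      exact expand_capify hinj (σ x)
    · intro a ha
      obtain ⟨x, -, hax⟩ := holes_pushSubst _ r₀ a ha
      exact goodCap_capify (σ x) a hax
    · rw [collapse_pushSubst, collapse_pushSubst]
      exact Rew.rule l₀ r₀ _ hR
    · intro a ha
      obtain ⟨x, hx, hax⟩ := holes_pushSubst _ r₀ a ha
      exact holes_pushSubst' _ l₀ (hvc l₀ r₀ x hR hx) hax
  | ctx g args i w w' hstep ih =>
    intro c hgood hexp
    cases c with
    | var y =>
      cases y with
      | inl x => exact absurd hexp (fun hc => by simp [expand] at hc)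
      | inr a =>
        have ha : isAlien ι a := hgood a rfl
        have hexp' : a = Term.fn g (Function.update args i w) := hexp
        subst hexp'
        refine ⟨.var (.inr (.fn g (Function.update args i w'))), rfl, ?_,
          Or.inr (HoleStep.here (Rew.ctx g args i w w' hstep))⟩
        rintro a' rfl
        exact ha
    | fn f capargs =>
      have hexp2 : Term.fn (ι f) (fun j => expand ι har (capargs (Fin.cast (har f) j)))
          = Term.fn g (Function.update args i w) := hexp
      injection hexp2 with h1 h2
      subst h1
      have harg : (fun j => expand ι har (capargs (Fin.cast (har f) j)))
          = Function.update args i w := eq_of_heq h2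
      have hw : expand ι har (capargs (Fin.cast (har f) i)) = w := by
        have := congrFun harg i
        rw [Function.update_self] at this
        exact this
      obtain ⟨c₀', hexp₀, hgood₀, hcase₀⟩ :=
        ih (capargs (Fin.cast (har f) i)) (fun a ha => hgood a ⟨_, ha⟩) hw
      refine ⟨.fn f (Function.update capargs (Fin.cast (har f) i) c₀'), ?_, ?_, ?_⟩
      · show Term.fn (ι f) _ = Term.fn (ι f) _
        congr 1
        funext i'
        show expand ι har (Function.update capargs (Fin.cast (har f) i) c₀' (Fin.cast (har f) i'))
            = Function.update args i w' i'
        by_cases hi : i' = i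
        · subst hi
          rw [Function.update_self, Function.update_self]
          exact hexp₀
        · have hne : Fin.cast (har f) i' ≠ Fin.cast (har f) i :=
            fun hc => hi (Fin.ext (by simpa using congrArg Fin.val hc))
          rw [Function.update_of_ne hne, Function.update_of_ne hi]
          have := congrFun harg i'
          rw [Function.update_of_ne hi] at this
          exact this
      · rintro a ⟨i', hi'⟩
        by_cases hii : i' = Fin.cast (har f) i
        · subst hii
          rw [Function.update_self] at hi'
          exact hgood₀ a hi'
        · rw [Function.update_of_ne hii] at hi'
          exact hgood a ⟨i', hi'⟩
      · rcases hcase₀ with ⟨hrw, hsub⟩ | hhs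
        · refine Or.inl ⟨?_, ?_⟩
          · show Rew R (Term.fn f (fun i' => collapse b (capargs i')))
              (Term.fn f (fun i' => collapse b (Function.update capargs (Fin.cast (har f) i) c₀' i')))
            have e1 : (fun i' => collapse b (Function.update capargs (Fin.cast (har f) i) c₀' i'))
                = Function.update (fun i' => collapse b (capargs i')) (Fin.cast (har f) i)
                    (collapse b c₀') := by
              funext i'
              by_cases hii : i' = Fin.cast (har f) i
              · subst hii
                rw [Function.update_self, Function.update_self]
              · rw [Function.update_of_ne hii, Function.update_of_ne hii]
            rw [e1]
            have := Rew.ctx f (fun i' => collapse b (capargs i')) (Fin.cast (har f) i)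
              (collapse b (capargs (Fin.cast (har f) i))) (collapse b c₀') hrw
            rwa [Function.update_eq_self] at this
          · rintro a ⟨i', hi'⟩
            by_cases hii : i' = Fin.cast (har f) i
            · subst hii
              rw [Function.update_self] at hi'
              exact ⟨Fin.cast (har f) i, hsub hi'⟩
            · rw [Function.update_of_ne hii] at hi'
              exact ⟨i', hi'⟩
        · exact Or.inr (HoleStep.ctx f capargs _ c₀' hhs)

lemma acc_expand (hinj : Function.Injective ι) (b : Term F arF X)
    (hnv : ∀ l r, (l, r) ∈ R → ∃ f as, l = Term.fn f as)
    (hvc : ∀ l r y, (l, r) ∈ R → Occurs y r → Occurs y l) :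
    ∀ e : Term F arF X, Acc (fun a b' => Rew R b' a) e →
      ∀ c : Term F arF (X ⊕ Term G arG X),
        Acc (fun c' c => HoleStep (Rew (mapRules ι har R)) c c') c →
        collapse b c = e → (∀ a ∈ Holes c, isAlien ι a) →
        (∀ a ∈ Holes c, Acc (fun a b => Rew (mapRules ι har R) b a) a) →
        Acc (fun a b => Rew (mapRules ι har R) b a) (expand ι har c) := by
  intro e he
  induction he with
  | intro e _ ihe =>
    intro c hc
    induction hc with
    | intro c _ ihc =>
      intro hcol hgood hacc
      constructor
      intro u hu
      obtain ⟨c', hexp', hgood', hcase⟩ := classify hinj b hnv hvc hu c hgood rfl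
      rcases hcase with ⟨hrw, hsub⟩ | hhs
      · have hacc' : ∀ a ∈ Holes c', Acc (fun a b => Rew (mapRules ι har R) b a) a :=
          fun a ha => hacc a (hsub ha)
        have := ihe (collapse b c') (by rw [hcol] at hrw; exact hrw) c'
          (acc_holeStep c' hacc') rfl hgood' hacc'
        rwa [hexp'] at this
      · have hacc' : ∀ a ∈ Holes c', Acc (fun a b => Rew (mapRules ι har R) b a) a := by
          intro a ha
          rcases holeStep_holes hhs a ha with h' | ⟨a₀, ha₀, hr⟩
          · exact hacc a h'
          · exact (hacc a₀ ha₀).inv hr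
        have := ihc c' hhs (by rw [holeStep_collapse b hhs]; exact hcol) hgood' hacc'
        rwa [hexp'] at this

lemma acc_all (hinj : Function.Injective ι) (b : Term F arF X)
    (hnv : ∀ l r, (l, r) ∈ R → ∃ f as, l = Term.fn f as)
    (hvc : ∀ l r y, (l, r) ∈ R → Occurs y r → Occurs y l)
    (hterm : Terminating (Rew R)) :
    ∀ t : Term G arG X, Acc (fun a b => Rew (mapRules ι har R) b a) t := by
  intro t
  induction t with
  | var x =>
    constructor
    intro u hu
    exact absurd hu (fun hc => rew_var_inv hnv hc)
  | fn g args ih =>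
    by_cases hg : ∃ f, ι f = g
    · obtain ⟨f, rfl⟩ := hg
      have hacc : ∀ a ∈ Holes (capify ι har (Term.fn (ι f) args)),
          Acc (fun a b => Rew (mapRules ι har R) b a) a := by
        intro a ha
        rw [capify_fn hinj] at ha
        obtain ⟨i, hi⟩ := ha
        exact holes_capify_acc _ (ih _) a hi
      have := acc_expand hinj b hnv hvc (collapse b (capify ι har (Term.fn (ι f) args)))
        (hterm.apply _) _ (acc_holeStep _ hacc) rfl (goodCap_capify _) hacc
      rwa [expand_capify hinj] at this
    · exact acc_fn_alien hnv hg args ih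

end Rspec

/-! ### bad rules make the base system non-terminating -/

lemma chain_var_lhs {R : Set (Term F arF X × Term F arF X)} {x : X} {r₀ : Term F arF X}
    (h : (Term.var x, r₀) ∈ R) : ¬ Terminating (Rew R) := by
  intro hT
  let f : ℕ → Term F arF X := fun n => Nat.rec (Term.var x) (fun _ t => subst (fun _ => t) r₀) n
  have hf : ∀ n, Rew R (f n) (f (n + 1)) := fun n => Rew.rule _ _ (fun _ => f n) h
  exact not_acc_of_chain _ f hf (hT.apply _)

lemma extra_var_nonterm {R : Set (Term F arF X × Term F arF X)} {l r₀ : Term F arF X} {y : X}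
    (hmem : (l, r₀) ∈ R) (hyr : Occurs y r₀) (hyl : ¬ Occurs y l) : ¬ Terminating (Rew R) := by
  classical
  intro hT
  set t₀ : Term F arF X := subst (fun _ => l) l with ht₀
  set σ₁ : X → Term F arF X := fun z => if z = y then t₀ else l with hσ₁
  have hsl : subst σ₁ l = t₀ := by
    rw [ht₀]
    apply subst_eq_of_occurs
    intro z hz
    have hzy : z ≠ y := fun hzy => hyl (hzy ▸ hz)
    simp [hσ₁, hzy]
  have h01 : Rew R t₀ (subst σ₁ r₀) := by
    have := Rew.rule l r₀ σ₁ hmem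
    rwa [hsl] at this
  have hs : Sub t₀ (subst σ₁ r₀) := by
    have := occurs_sub (σ := σ₁) hyr
    simpa [hσ₁] using this
  exact not_acc_of_sub_step h01 hs (hT.apply _)

lemma rew_nonempty {A Y : Type} {ar : A → ℕ} {S : Set (Term A ar Y × Term A ar Y)}
    {t u : Term A ar Y} (h : Rew S t u) : S.Nonempty := by
  induction h with
  | rule l r σ hmem => exact ⟨(l, r), hmem⟩
  | ctx _ _ _ _ _ _ ih => exact ih

end SigExt

/-- Signature extension reflects (and preserves) termination: for an arity-preserving
embedding ι : F → G, the rewrite relation generated by R on T(F,X) is well-founded iff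
the rewrite relation generated by (the image of) R on T(G,X) is well-founded. -/
theorem signature_extension_reflects_termination
    (F G X : Type) (arF : F → ℕ) (arG : G → ℕ)
    (ι : F → G) (hinj : Function.Injective ι) (har : ∀ f, arG (ι f) = arF f)
    (R : Set (Term F arF X × Term F arF X)) :
    Terminating (Rew R) ↔ Terminating (Rew (mapRules ι har R)) := by
  constructor
  · intro h
    by_cases hbad : (∃ x r₀, (Term.var x, r₀) ∈ R) ∨
        ∃ l r₀ y, (l, r₀) ∈ R ∧ SigExt.Occurs y r₀ ∧ ¬ SigExt.Occurs y l
    · exfalso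
      rcases hbad with ⟨x, r₀, hx⟩ | ⟨l, r₀, y, hmem, hyr, hyl⟩
      · exact SigExt.chain_var_lhs hx h
      · exact SigExt.extra_var_nonterm hmem hyr hyl h
    · push_neg at hbad
      obtain ⟨hnv0, hvc⟩ := hbad
      rcases Set.eq_empty_or_nonempty R with rfl | ⟨⟨l₀, r₀⟩, hR0⟩
      · refine WellFounded.intro fun t => ?_
        constructor
        intro u hu
        exfalso
        obtain ⟨⟨l, r⟩, hp⟩ := SigExt.rew_nonempty hu
        obtain ⟨l', r', hl, -⟩ := hp
        exact hl
      · have hnv : ∀ l r, (l, r) ∈ R → ∃ f as, l = Term.fn f as := by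
          intro l r hlr
          cases l with
          | var x => exact absurd hlr (hnv0 x r)
          | fn f as => exact ⟨f, as, rfl⟩
        exact WellFounded.intro (SigExt.acc_all hinj l₀ hnv hvc h)
  · intro h
    refine @Subrelation.wf _
      (InvImage (fun a b => Rew (mapRules ι har R) b a) (mapTerm ι har))
      (fun a b => Rew R b a) (fun {a b} hab => SigExt.map_rew ι har hab) (InvImage.wf _ h)
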